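/- Let 0 < H ≤ R be reals. Let h and Z be independent real random variables where h has density f_h(x) = 6x/H² − 6x²/H³ on [0, H] and Z has density f_Z(z) = 2z/R² on [0, R]. Then the random variable W = √(h² + Z²) has probability density f(w) given piecewise by: f(w) = 6w³/(R²H²) − 4w⁴/(R²H³) for 0 ≤ w < H; f(w) = 2w/R² for H ≤ w < R; and f(w) = 2w/R² − 6w·(w²−R²)/(R²H²) + 4w·(w²−R²)^{3/2}/(R²H³) for R ≤ w ≤ √(R²+H²); and f(w) = 0 otherwise. -/

import Mathlib

open MeasureTheory ProbabilityTheory Set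

private noncomputable def pden (H : ℝ) : ℝ → ℝ :=
  fun x => if x ∈ Set.Icc (0 : ℝ) H then 6 * x / H ^ 2 - 6 * x ^ 2 / H ^ 3 else 0

private noncomputable def qden (R : ℝ) : ℝ → ℝ :=
  fun z => if z ∈ Set.Icc (0 : ℝ) R then 2 * z / R ^ 2 else 0

private noncomputable def Gfun (t R x : ℝ) : ℝ :=
  min (max (t ^ 2 - x ^ 2) 0) (R ^ 2) / R ^ 2

private lemma Gfun_cont (t R : ℝ) : Continuous (fun x => Gfun t R x) :=
  (((continuous_const.sub (continuous_pow 2)).max continuous_const).min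
    continuous_const).div_const _

private lemma Gfun_nonneg (t R x : ℝ) : 0 ≤ Gfun t R x :=
  div_nonneg (le_min (le_max_right _ _) (sq_nonneg R)) (sq_nonneg R)

private lemma hasDerivAt_poly5 (c1 c2 c3 c4 c5 x : ℝ) :
    HasDerivAt (fun y => c1 * y ^ 1 + c2 * y ^ 2 + c3 * y ^ 3 + c4 * y ^ 4 + c5 * y ^ 5)
      (c1 + 2 * c2 * x + 3 * c3 * x ^ 2 + 4 * c4 * x ^ 3 + 5 * c5 * x ^ 4) x := by
  have h := (((((hasDerivAt_pow 1 x).const_mul c1).add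
    ((hasDerivAt_pow 2 x).const_mul c2)).add
    ((hasDerivAt_pow 3 x).const_mul c3)).add
    ((hasDerivAt_pow 4 x).const_mul c4)).add
    ((hasDerivAt_pow 5 x).const_mul c5)
  refine h.congr_deriv ?_
  push_cast
  ring

private lemma integral_poly5 (a b c1 c2 c3 c4 c5 : ℝ) :
    ∫ x in a..b, (c1 + 2 * c2 * x + 3 * c3 * x ^ 2 + 4 * c4 * x ^ 3 + 5 * c5 * x ^ 4) =
      (c1 * b ^ 1 + c2 * b ^ 2 + c3 * b ^ 3 + c4 * b ^ 4 + c5 * b ^ 5)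
        - (c1 * a ^ 1 + c2 * a ^ 2 + c3 * a ^ 3 + c4 * a ^ 4 + c5 * a ^ 5) :=
  intervalIntegral.integral_eq_sub_of_hasDerivAt
    (fun x _ => hasDerivAt_poly5 c1 c2 c3 c4 c5 x)
    ((by continuity : Continuous fun x : ℝ =>
      c1 + 2 * c2 * x + 3 * c3 * x ^ 2 + 4 * c4 * x ^ 3 + 5 * c5 * x ^ 4).intervalIntegrable a b)

private lemma intervalIntegral_congr_Ioo {g1 g2 : ℝ → ℝ} {a b : ℝ} (hab : a ≤ b)
    (h : ∀ x ∈ Set.Ioo a b, g1 x = g2 x) :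
    ∫ x in a..b, g1 x = ∫ x in a..b, g2 x := by
  rw [intervalIntegral.integral_of_le hab, intervalIntegral.integral_of_le hab,
    integral_Ioc_eq_integral_Ioo, integral_Ioc_eq_integral_Ioo]
  exact setIntegral_congr_fun measurableSet_Ioo h

private lemma eval_poly_integral {g : ℝ → ℝ} {a b : ℝ} (c1 c2 c3 c4 c5 : ℝ) (hab : a ≤ b)
    (h : ∀ x ∈ Set.Ioo a b, g x = c1 + 2 * c2 * x + 3 * c3 * x ^ 2 + 4 * c4 * x ^ 3
        + 5 * c5 * x ^ 4) :
    ∫ x in a..b, g x = (c1 * b ^ 1 + c2 * b ^ 2 + c3 * b ^ 3 + c4 * b ^ 4 + c5 * b ^ 5)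
      - (c1 * a ^ 1 + c2 * a ^ 2 + c3 * a ^ 3 + c4 * a ^ 4 + c5 * a ^ 5) := by
  rw [intervalIntegral_congr_Ioo hab h]
  exact integral_poly5 a b c1 c2 c3 c4 c5

private lemma sq_rpow_5_2 {u : ℝ} (hu : 0 ≤ u) : (u ^ 2) ^ ((5 : ℝ) / 2) = u ^ 5 := by
  have h2 : ((u : ℝ) ^ 2) = u ^ ((2 : ℕ) : ℝ) := (Real.rpow_natCast u 2).symm
  rw [h2, ← Real.rpow_mul hu]
  rw [show ((2 : ℕ) : ℝ) * ((5 : ℝ) / 2) = ((5 : ℕ) : ℝ) by push_cast; ring]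
  exact Real.rpow_natCast u 5

private lemma sq_rpow_3_2 {u : ℝ} (hu : 0 ≤ u) : (u ^ 2) ^ ((3 : ℝ) / 2) = u ^ 3 := by
  have h2 : ((u : ℝ) ^ 2) = u ^ ((2 : ℕ) : ℝ) := (Real.rpow_natCast u 2).symm
  rw [h2, ← Real.rpow_mul hu]
  rw [show ((2 : ℕ) : ℝ) * ((3 : ℝ) / 2) = ((3 : ℕ) : ℝ) by push_cast; ring]
  exact Real.rpow_natCast u 3

private lemma continuous_rpow32 : Continuous fun y : ℝ => y ^ ((3 : ℝ) / 2) :=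
  continuous_iff_continuousAt.2 fun x =>
    Real.continuousAt_rpow_const x _ (Or.inr (by norm_num))

private lemma hasDerivAt_rpow_sq_sub (R w : ℝ) :
    HasDerivAt (fun y : ℝ => (y ^ 2 - R ^ 2) ^ ((5 : ℝ) / 2))
      (5 * w * (w ^ 2 - R ^ 2) ^ ((3 : ℝ) / 2)) w := by
  have hi : HasDerivAt (fun y : ℝ => y ^ 2 - R ^ 2) (2 * w) w := by
    simpa using (hasDerivAt_pow 2 w).sub_const (R ^ 2)
  have ho := Real.hasDerivAt_rpow_const (x := w ^ 2 - R ^ 2) (p := (5 : ℝ) / 2)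
    (Or.inr (by norm_num))
  have h := ho.comp w hi
  have h52 : (5 : ℝ) / 2 - 1 = 3 / 2 := by norm_num
  rw [h52] at h
  refine h.congr_deriv ?_
  ring

private lemma continuous_f3 (R H : ℝ) : Continuous fun w : ℝ =>
    2 * w / R ^ 2 - 6 * w * (w ^ 2 - R ^ 2) / (R ^ 2 * H ^ 2)
      + 4 * w * (w ^ 2 - R ^ 2) ^ ((3 : ℝ) / 2) / (R ^ 2 * H ^ 3) := by
  have hc : Continuous fun w : ℝ => (w ^ 2 - R ^ 2) ^ ((3 : ℝ) / 2) :=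
    continuous_rpow32.comp ((continuous_pow 2).sub continuous_const)
  exact ((by continuity : Continuous fun w : ℝ =>
    2 * w / R ^ 2 - 6 * w * (w ^ 2 - R ^ 2) / (R ^ 2 * H ^ 2)).add
    (((continuous_const.mul continuous_id).mul hc).div_const _))

private lemma integral_f3 (R H a b : ℝ) (hR : R ≠ 0) (hH : H ≠ 0) :
    ∫ w in a..b, (2 * w / R ^ 2 - 6 * w * (w ^ 2 - R ^ 2) / (R ^ 2 * H ^ 2)
        + 4 * w * (w ^ 2 - R ^ 2) ^ ((3 : ℝ) / 2) / (R ^ 2 * H ^ 3))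
      = ((1 / R ^ 2 + 3 / H ^ 2) * b ^ 2 - 3 / (2 * R ^ 2 * H ^ 2) * b ^ 4
          + 4 / (5 * R ^ 2 * H ^ 3) * (b ^ 2 - R ^ 2) ^ ((5 : ℝ) / 2))
        - ((1 / R ^ 2 + 3 / H ^ 2) * a ^ 2 - 3 / (2 * R ^ 2 * H ^ 2) * a ^ 4
          + 4 / (5 * R ^ 2 * H ^ 3) * (a ^ 2 - R ^ 2) ^ ((5 : ℝ) / 2)) := by
  apply intervalIntegral.integral_eq_sub_of_hasDerivAt
    (f := fun y => (1 / R ^ 2 + 3 / H ^ 2) * y ^ 2 - 3 / (2 * R ^ 2 * H ^ 2) * y ^ 4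
      + 4 / (5 * R ^ 2 * H ^ 3) * (y ^ 2 - R ^ 2) ^ ((5 : ℝ) / 2))
  · intro w _
    have h1 : HasDerivAt (fun y : ℝ => (1 / R ^ 2 + 3 / H ^ 2) * y ^ 2
        - 3 / (2 * R ^ 2 * H ^ 2) * y ^ 4)
        ((1 / R ^ 2 + 3 / H ^ 2) * ((2 : ℕ) * w ^ 1)
          - 3 / (2 * R ^ 2 * H ^ 2) * ((4 : ℕ) * w ^ 3)) w :=
      ((hasDerivAt_pow 2 w).const_mul _).sub ((hasDerivAt_pow 4 w).const_mul _)
    have h2 := (hasDerivAt_rpow_sq_sub R w).const_mul (4 / (5 * R ^ 2 * H ^ 3))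
    have h := h1.add h2
    refine h.congr_deriv ?_
    push_cast
    field_simp
    ring
  · exact (continuous_f3 R H).intervalIntegrable a b

private lemma qden_Icc (R : ℝ) (hR : 0 < R) (c : ℝ) (hc : 0 ≤ c) :
    (volume.withDensity fun z => ENNReal.ofReal (qden R z)) (Icc (-c) c)
      = ENNReal.ofReal (min (c ^ 2) (R ^ 2) / R ^ 2) := by
  have hqind : qden R = (Icc (0 : ℝ) R).indicator (fun z => 2 * z / R ^ 2) := by
    funext z
    simp only [qden, Set.indicator_apply]
  have hqInt : Integrable (qden R) volume := by
    rw [hqind]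
    exact (integrable_indicator_iff measurableSet_Icc).2
      ((by continuity : Continuous fun z : ℝ => 2 * z / R ^ 2).integrableOn_Icc)
  have hq_nonneg : ∀ z, 0 ≤ qden R z := by
    intro z
    simp only [qden]
    split_ifs with hz
    · exact div_nonneg (by linarith [hz.1]) (by positivity)
    · exact le_refl 0
  rw [withDensity_apply _ measurableSet_Icc,
    ← ofReal_integral_eq_lintegral_ofReal hqInt.integrableOn (ae_of_all _ hq_nonneg)]
  congr 1
  rw [integral_Icc_eq_integral_Ioc, ← intervalIntegral.integral_of_le (by linarith : -c ≤ c)]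
  have hzero1 : ∫ z in (-c)..(0 : ℝ), qden R z = 0 := by
    rw [intervalIntegral_congr_Ioo (g2 := fun _ => (0 : ℝ)) (by linarith) ?_]
    · simp
    · intro z hz
      simp only [qden, Set.mem_Icc]
      rw [if_neg]
      rintro ⟨hz0, -⟩
      linarith [hz.2]
  rcases le_or_gt c R with hcR | hcR
  · rw [← intervalIntegral.integral_add_adjacent_intervals (a := -c) (b := 0) (c := c)
      (hqInt.intervalIntegrable) (hqInt.intervalIntegrable), hzero1, zero_add]
    rw [eval_poly_integral 0 (1 / R ^ 2) 0 0 0 hc ?_]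
    · rw [min_eq_left (by nlinarith : c ^ 2 ≤ R ^ 2)]
      ring
    · intro z hz
      simp only [qden, Set.mem_Icc]
      rw [if_pos ⟨hz.1.le, le_trans hz.2.le hcR⟩]
      ring
  · rw [← intervalIntegral.integral_add_adjacent_intervals (a := -c) (b := 0) (c := c)
      (hqInt.intervalIntegrable) (hqInt.intervalIntegrable), hzero1, zero_add]
    rw [← intervalIntegral.integral_add_adjacent_intervals (a := 0) (b := R) (c := c)
      (hqInt.intervalIntegrable) (hqInt.intervalIntegrable)]
    have hzero2 : ∫ z in R..c, qden R z = 0 := by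
      rw [intervalIntegral_congr_Ioo (g2 := fun _ => (0 : ℝ)) hcR.le ?_]
      · simp
      · intro z hz
        simp only [qden, Set.mem_Icc]
        rw [if_neg]
        rintro ⟨-, hzR⟩
        linarith [hz.1]
    rw [hzero2, add_zero]
    rw [eval_poly_integral 0 (1 / R ^ 2) 0 0 0 hR.le ?_]
    · rw [min_eq_right (by nlinarith : R ^ 2 ≤ c ^ 2)]
      field_simp
      ring
    · intro z hz
      simp only [qden, Set.mem_Icc]
      rw [if_pos ⟨hz.1.le, hz.2.le⟩]
      ring

private lemma section_measure (R t : ℝ) (hR : 0 < R) (ht : 0 ≤ t) (x : ℝ) :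
    (volume.withDensity fun z => ENNReal.ofReal (qden R z))
        {z : ℝ | Real.sqrt (x ^ 2 + z ^ 2) ≤ t}
      = ENNReal.ofReal (Gfun t R x) := by
  by_cases hx : x ^ 2 ≤ t ^ 2
  · have h1 : 0 ≤ t ^ 2 - x ^ 2 := by linarith
    have hc0 : 0 ≤ Real.sqrt (t ^ 2 - x ^ 2) := Real.sqrt_nonneg _
    have hc2 : Real.sqrt (t ^ 2 - x ^ 2) ^ 2 = t ^ 2 - x ^ 2 := Real.sq_sqrt h1
    have hset : {z : ℝ | Real.sqrt (x ^ 2 + z ^ 2) ≤ t}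
        = Icc (-Real.sqrt (t ^ 2 - x ^ 2)) (Real.sqrt (t ^ 2 - x ^ 2)) := by
      ext z
      simp only [Set.mem_setOf_eq, Set.mem_Icc]
      constructor
      · intro hz
        have h2 : x ^ 2 + z ^ 2 ≤ t ^ 2 := by
          have h3 : Real.sqrt (x ^ 2 + z ^ 2) ^ 2 ≤ t ^ 2 :=
            pow_le_pow_left₀ (Real.sqrt_nonneg _) hz 2
          rwa [Real.sq_sqrt (by positivity)] at h3
        have h3 : z ^ 2 ≤ Real.sqrt (t ^ 2 - x ^ 2) ^ 2 := by nlinarith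
        exact abs_le_of_sq_le_sq' h3 hc0
      · rintro ⟨h4, h5⟩
        have h6 : z ^ 2 ≤ Real.sqrt (t ^ 2 - x ^ 2) ^ 2 := sq_le_sq' h4 h5
        have h7 : x ^ 2 + z ^ 2 ≤ t ^ 2 := by nlinarith
        calc Real.sqrt (x ^ 2 + z ^ 2) ≤ Real.sqrt (t ^ 2) := Real.sqrt_le_sqrt h7
        _ = t := Real.sqrt_sq ht
    rw [hset, qden_Icc R hR _ hc0, hc2]
    simp only [Gfun, max_eq_left h1]
  · push_neg at hx
    have hset : {z : ℝ | Real.sqrt (x ^ 2 + z ^ 2) ≤ t} = (∅ : Set ℝ) := by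
      ext z
      simp only [Set.mem_setOf_eq, Set.mem_empty_iff_false, iff_false, not_le]
      have h7 : t ^ 2 < x ^ 2 + z ^ 2 := by nlinarith [sq_nonneg z]
      calc t = Real.sqrt (t ^ 2) := (Real.sqrt_sq ht).symm
      _ < Real.sqrt (x ^ 2 + z ^ 2) := Real.sqrt_lt_sqrt (by positivity) h7
    rw [hset]
    have : Gfun t R x = 0 := by
      simp only [Gfun, max_eq_right (by linarith : t ^ 2 - x ^ 2 ≤ 0),
        min_eq_left (sq_nonneg R)]
      simp
    rw [this]
    simp

set_option maxHeartbeats 1000000 in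
private lemma case_A (H R t : ℝ) (hH : 0 < H) (hHR : H ≤ R) (hR : 0 < R) (hH0 : (0:ℝ) ≤ H)
    (ht : 0 ≤ t) (htH : t < H) (f : ℝ → ℝ)
    (hf : ∀ w, f w =
      if 0 ≤ w ∧ w < H then 6 * w ^ 3 / (R ^ 2 * H ^ 2) - 4 * w ^ 4 / (R ^ 2 * H ^ 3)
      else if H ≤ w ∧ w < R then 2 * w / R ^ 2
      else if R ≤ w ∧ w ≤ Real.sqrt (R ^ 2 + H ^ 2) then
        2 * w / R ^ 2 - 6 * w * (w ^ 2 - R ^ 2) / (R ^ 2 * H ^ 2)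
          + 4 * w * (w ^ 2 - R ^ 2) ^ ((3 : ℝ) / 2) / (R ^ 2 * H ^ 3)
      else 0)
    (hPGc : Continuous fun x : ℝ => (6 * x / H ^ 2 - 6 * x ^ 2 / H ^ 3) * Gfun t R x) :
    ∫ x in (0:ℝ)..H, (6 * x / H ^ 2 - 6 * x ^ 2 / H ^ 3) * Gfun t R x
      = ∫ w in (0:ℝ)..t, f w := by
  rw [← intervalIntegral.integral_add_adjacent_intervals (a := 0) (b := t) (c := H)
    (hPGc.intervalIntegrable 0 t) (hPGc.intervalIntegrable t H)]
  have h2 : ∫ x in t..H, (6 * x / H ^ 2 - 6 * x ^ 2 / H ^ 3) * Gfun t R x = 0 := by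
    have key := intervalIntegral_congr_Ioo
        (g1 := fun x => (6 * x / H ^ 2 - 6 * x ^ 2 / H ^ 3) * Gfun t R x)
        (g2 := fun _ => (0:ℝ)) htH.le (by
      intro x hx
      have hmax : max (t ^ 2 - x ^ 2) 0 = 0 :=
        max_eq_right (by nlinarith [hx.1, ht] : t ^ 2 - x ^ 2 ≤ 0)
      simp [Gfun, hmax, min_eq_left (sq_nonneg R)])
    simpa using key
  have eA1 := eval_poly_integral
      (g := fun x => (6 * x / H ^ 2 - 6 * x ^ 2 / H ^ 3) * Gfun t R x)
      0 (3 * t ^ 2 / (H ^ 2 * R ^ 2)) (-(2 * t ^ 2 / (H ^ 3 * R ^ 2)))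
      (-(3 / (2 * (H ^ 2 * R ^ 2)))) (6 / (5 * (H ^ 3 * R ^ 2))) ht (by
    intro x hx
    have hmax : max (t ^ 2 - x ^ 2) 0 = t ^ 2 - x ^ 2 :=
      max_eq_left (by nlinarith [hx.1, hx.2])
    have hmin : min (t ^ 2 - x ^ 2) (R ^ 2) = t ^ 2 - x ^ 2 :=
      min_eq_left (by nlinarith [hx.1, hx.2, ht, htH, hHR])
    simp only [Gfun, hmax, hmin]
    field_simp
    ring)
  have eA2 := eval_poly_integral (g := f) 0 0 0 (3 / (2 * (R ^ 2 * H ^ 2)))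
      (-(4 / (5 * (R ^ 2 * H ^ 3)))) ht (by
    intro w hw
    rw [hf w, if_pos ⟨hw.1.le, lt_trans hw.2 htH⟩]
    ring)
  rw [h2, add_zero, eA1, eA2]
  field_simp
  ring

set_option maxHeartbeats 1000000 in
private lemma case_B (H R t : ℝ) (hH : 0 < H) (hHR : H ≤ R) (hR : 0 < R) (hH0 : (0:ℝ) ≤ H)
    (ht : 0 ≤ t) (htH : H ≤ t) (htR : t < R) (f : ℝ → ℝ)
    (hf : ∀ w, f w =
      if 0 ≤ w ∧ w < H then 6 * w ^ 3 / (R ^ 2 * H ^ 2) - 4 * w ^ 4 / (R ^ 2 * H ^ 3)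
      else if H ≤ w ∧ w < R then 2 * w / R ^ 2
      else if R ≤ w ∧ w ≤ Real.sqrt (R ^ 2 + H ^ 2) then
        2 * w / R ^ 2 - 6 * w * (w ^ 2 - R ^ 2) / (R ^ 2 * H ^ 2)
          + 4 * w * (w ^ 2 - R ^ 2) ^ ((3 : ℝ) / 2) / (R ^ 2 * H ^ 3)
      else 0)
    (hfInt : Integrable f volume)
    (hPGc : Continuous fun x : ℝ => (6 * x / H ^ 2 - 6 * x ^ 2 / H ^ 3) * Gfun t R x)
    (eB2 : ∫ x in (0:ℝ)..H, f x = (0 * H ^ 1 + 0 * H ^ 2 + 0 * H ^ 3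
        + 3 / (2 * (R ^ 2 * H ^ 2)) * H ^ 4 + -(4 / (5 * (R ^ 2 * H ^ 3))) * H ^ 5)
      - (0 * 0 ^ 1 + 0 * 0 ^ 2 + 0 * 0 ^ 3 + 3 / (2 * (R ^ 2 * H ^ 2)) * 0 ^ 4
        + -(4 / (5 * (R ^ 2 * H ^ 3))) * 0 ^ 5)) :
    ∫ x in (0:ℝ)..H, (6 * x / H ^ 2 - 6 * x ^ 2 / H ^ 3) * Gfun t R x
      = ∫ w in (0:ℝ)..t, f w := by
  have eB1 := eval_poly_integral
      (g := fun x => (6 * x / H ^ 2 - 6 * x ^ 2 / H ^ 3) * Gfun t R x)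
      0 (3 * t ^ 2 / (H ^ 2 * R ^ 2)) (-(2 * t ^ 2 / (H ^ 3 * R ^ 2)))
      (-(3 / (2 * (H ^ 2 * R ^ 2)))) (6 / (5 * (H ^ 3 * R ^ 2))) hH0 (by
    intro x hx
    have hmax : max (t ^ 2 - x ^ 2) 0 = t ^ 2 - x ^ 2 :=
      max_eq_left (by nlinarith [hx.1, hx.2, htH] : (0:ℝ) ≤ t ^ 2 - x ^ 2)
    have hmin : min (t ^ 2 - x ^ 2) (R ^ 2) = t ^ 2 - x ^ 2 :=
      min_eq_left (by nlinarith [hx.1, ht, htR] : t ^ 2 - x ^ 2 ≤ R ^ 2)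
    simp only [Gfun, hmax, hmin]
    field_simp
    ring)
  rw [← intervalIntegral.integral_add_adjacent_intervals (a := 0) (b := H) (c := t)
    hfInt.intervalIntegrable hfInt.intervalIntegrable]
  have eB3 := eval_poly_integral (g := f) 0 (1 / R ^ 2) 0 0 0 htH (by
    intro w hw
    rw [hf w, if_neg (by rintro ⟨-, hc⟩; linarith [hw.1]),
      if_pos ⟨hw.1.le, lt_trans hw.2 htR⟩]
    ring)
  rw [eB1, eB2, eB3]
  field_simp
  ring

set_option maxHeartbeats 1000000 in
private lemma case_C (H R t B : ℝ) (hH : 0 < H) (hHR : H ≤ R) (hR : 0 < R) (hH0 : (0:ℝ) ≤ H)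
    (hB2 : B ^ 2 = R ^ 2 + H ^ 2) (hB0 : 0 ≤ B) (hRB : R ≤ B) (hHB : H ≤ B)
    (hBdef : B = Real.sqrt (R ^ 2 + H ^ 2))
    (ht : 0 ≤ t) (htH : H ≤ t) (htR : R ≤ t) (htB : t ≤ B) (f : ℝ → ℝ)
    (hf : ∀ w, f w =
      if 0 ≤ w ∧ w < H then 6 * w ^ 3 / (R ^ 2 * H ^ 2) - 4 * w ^ 4 / (R ^ 2 * H ^ 3)
      else if H ≤ w ∧ w < R then 2 * w / R ^ 2
      else if R ≤ w ∧ w ≤ B then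
        2 * w / R ^ 2 - 6 * w * (w ^ 2 - R ^ 2) / (R ^ 2 * H ^ 2)
          + 4 * w * (w ^ 2 - R ^ 2) ^ ((3 : ℝ) / 2) / (R ^ 2 * H ^ 3)
      else 0)
    (hfInt : Integrable f volume)
    (hPGc : Continuous fun x : ℝ => (6 * x / H ^ 2 - 6 * x ^ 2 / H ^ 3) * Gfun t R x)
    (eB2 : ∫ x in (0:ℝ)..H, f x = (0 * H ^ 1 + 0 * H ^ 2 + 0 * H ^ 3
        + 3 / (2 * (R ^ 2 * H ^ 2)) * H ^ 4 + -(4 / (5 * (R ^ 2 * H ^ 3))) * H ^ 5)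
      - (0 * 0 ^ 1 + 0 * 0 ^ 2 + 0 * 0 ^ 3 + 3 / (2 * (R ^ 2 * H ^ 2)) * 0 ^ 4
        + -(4 / (5 * (R ^ 2 * H ^ 3))) * 0 ^ 5))
    (eC3 : ∫ x in H..R, f x = (0 * R ^ 1 + 1 / R ^ 2 * R ^ 2 + 0 * R ^ 3 + 0 * R ^ 4 + 0 * R ^ 5)
      - (0 * H ^ 1 + 1 / R ^ 2 * H ^ 2 + 0 * H ^ 3 + 0 * H ^ 4 + 0 * H ^ 5)) :
    ∫ x in (0:ℝ)..H, (6 * x / H ^ 2 - 6 * x ^ 2 / H ^ 3) * Gfun t R x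
      = ∫ w in (0:ℝ)..t, f w := by
  have h1 : 0 ≤ t ^ 2 - R ^ 2 := by nlinarith [htR, hR]
  set a := Real.sqrt (t ^ 2 - R ^ 2) with hadef
  have ha0 : 0 ≤ a := Real.sqrt_nonneg _
  have ha2 : a ^ 2 = t ^ 2 - R ^ 2 := Real.sq_sqrt h1
  have haH : a ≤ H := by
    nlinarith [ha2, hB2, ha0, hH0, sq_nonneg (a - H), sq_nonneg (a + H),
      pow_le_pow_left₀ ht htB 2]
  rw [← intervalIntegral.integral_add_adjacent_intervals (a := 0) (b := a) (c := H)
    (hPGc.intervalIntegrable 0 a) (hPGc.intervalIntegrable a H)]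
  have eC1 := eval_poly_integral
      (g := fun x => (6 * x / H ^ 2 - 6 * x ^ 2 / H ^ 3) * Gfun t R x)
      0 (3 / H ^ 2) (-(2 / H ^ 3)) 0 0 ha0 (by
    intro x hx
    have hx2 : x ^ 2 < t ^ 2 - R ^ 2 := by nlinarith [hx.1, hx.2, ha2, ha0]
    have hmax : max (t ^ 2 - x ^ 2) 0 = t ^ 2 - x ^ 2 :=
      max_eq_left (by nlinarith [sq_nonneg R])
    have hmin : min (t ^ 2 - x ^ 2) (R ^ 2) = R ^ 2 :=
      min_eq_right (by nlinarith)
    simp only [Gfun, hmax, hmin]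
    field_simp
    ring)
  have eC2 := eval_poly_integral
      (g := fun x => (6 * x / H ^ 2 - 6 * x ^ 2 / H ^ 3) * Gfun t R x)
      0 (3 * t ^ 2 / (H ^ 2 * R ^ 2)) (-(2 * t ^ 2 / (H ^ 3 * R ^ 2)))
      (-(3 / (2 * (H ^ 2 * R ^ 2)))) (6 / (5 * (H ^ 3 * R ^ 2))) haH (by
    intro x hx
    have hmax : max (t ^ 2 - x ^ 2) 0 = t ^ 2 - x ^ 2 :=
      max_eq_left (by nlinarith [hx.1, hx.2, ha0, htR, hHR] : (0:ℝ) ≤ t ^ 2 - x ^ 2)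
    have hmin : min (t ^ 2 - x ^ 2) (R ^ 2) = t ^ 2 - x ^ 2 :=
      min_eq_left (by nlinarith [hx.1, ha0, ha2])
    simp only [Gfun, hmax, hmin]
    field_simp
    ring)
  rw [← intervalIntegral.integral_add_adjacent_intervals (a := 0) (b := R) (c := t)
    hfInt.intervalIntegrable hfInt.intervalIntegrable,
    ← intervalIntegral.integral_add_adjacent_intervals (a := 0) (b := H) (c := R)
    hfInt.intervalIntegrable hfInt.intervalIntegrable]
  have eC4 : ∫ w in R..t, f w = ∫ w in R..t,
      (2 * w / R ^ 2 - 6 * w * (w ^ 2 - R ^ 2) / (R ^ 2 * H ^ 2)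
        + 4 * w * (w ^ 2 - R ^ 2) ^ ((3 : ℝ) / 2) / (R ^ 2 * H ^ 3)) :=
    intervalIntegral_congr_Ioo htR (by
      intro w hw
      rw [hf w, if_neg (by rintro ⟨-, hc⟩; linarith [hw.1, hHR]),
        if_neg (by rintro ⟨-, hc⟩; linarith [hw.1]),
        if_pos ⟨hw.1.le, le_trans hw.2.le htB⟩])
  rw [eC1, eC2, eB2, eC3, eC4, integral_f3 R H R t hR.ne' hH.ne']
  rw [show R ^ 2 - R ^ 2 = (0:ℝ) by ring,
    Real.zero_rpow (by norm_num : ((5:ℝ)/2) ≠ 0)]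
  rw [show t ^ 2 - R ^ 2 = a ^ 2 from ha2.symm, sq_rpow_5_2 ha0]
  rw [show a ^ 5 = a * (a ^ 2) ^ 2 by ring, show a ^ 4 = (a ^ 2) ^ 2 by ring,
    show a ^ 3 = a * a ^ 2 by ring, ha2]
  field_simp
  ring

set_option maxHeartbeats 1000000 in
private lemma case_D (H R t B : ℝ) (hH : 0 < H) (hHR : H ≤ R) (hR : 0 < R) (hH0 : (0:ℝ) ≤ H)
    (hB2 : B ^ 2 = R ^ 2 + H ^ 2) (hB0 : 0 ≤ B) (hRB : R ≤ B) (hHB : H ≤ B)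
    (ht : 0 ≤ t) (htB : B < t) (f : ℝ → ℝ)
    (hf : ∀ w, f w =
      if 0 ≤ w ∧ w < H then 6 * w ^ 3 / (R ^ 2 * H ^ 2) - 4 * w ^ 4 / (R ^ 2 * H ^ 3)
      else if H ≤ w ∧ w < R then 2 * w / R ^ 2
      else if R ≤ w ∧ w ≤ B then
        2 * w / R ^ 2 - 6 * w * (w ^ 2 - R ^ 2) / (R ^ 2 * H ^ 2)
          + 4 * w * (w ^ 2 - R ^ 2) ^ ((3 : ℝ) / 2) / (R ^ 2 * H ^ 3)
      else 0)
    (hf_zero_gt : ∀ w : ℝ, B < w → f w = 0)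
    (hfInt : Integrable f volume)
    (eB2 : ∫ x in (0:ℝ)..H, f x = (0 * H ^ 1 + 0 * H ^ 2 + 0 * H ^ 3
        + 3 / (2 * (R ^ 2 * H ^ 2)) * H ^ 4 + -(4 / (5 * (R ^ 2 * H ^ 3))) * H ^ 5)
      - (0 * 0 ^ 1 + 0 * 0 ^ 2 + 0 * 0 ^ 3 + 3 / (2 * (R ^ 2 * H ^ 2)) * 0 ^ 4
        + -(4 / (5 * (R ^ 2 * H ^ 3))) * 0 ^ 5))
    (eC3 : ∫ x in H..R, f x = (0 * R ^ 1 + 1 / R ^ 2 * R ^ 2 + 0 * R ^ 3 + 0 * R ^ 4 + 0 * R ^ 5)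
      - (0 * H ^ 1 + 1 / R ^ 2 * H ^ 2 + 0 * H ^ 3 + 0 * H ^ 4 + 0 * H ^ 5)) :
    ∫ x in (0:ℝ)..H, (6 * x / H ^ 2 - 6 * x ^ 2 / H ^ 3) * Gfun t R x
      = ∫ w in (0:ℝ)..t, f w := by
  have eD1 := eval_poly_integral
      (g := fun x => (6 * x / H ^ 2 - 6 * x ^ 2 / H ^ 3) * Gfun t R x)
      0 (3 / H ^ 2) (-(2 / H ^ 3)) 0 0 hH0 (by
    intro x hx
    have hmax : max (t ^ 2 - x ^ 2) 0 = t ^ 2 - x ^ 2 :=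
      max_eq_left (by nlinarith [hx.1, hx.2, hHB, htB, hB0] : (0:ℝ) ≤ t ^ 2 - x ^ 2)
    have hmin : min (t ^ 2 - x ^ 2) (R ^ 2) = R ^ 2 :=
      min_eq_right (by nlinarith [hx.1, hx.2, hB2, hB0, htB])
    simp only [Gfun, hmax, hmin]
    field_simp
    ring)
  rw [← intervalIntegral.integral_add_adjacent_intervals (a := 0) (b := B) (c := t)
    hfInt.intervalIntegrable hfInt.intervalIntegrable]
  have hzero : ∫ w in B..t, f w = 0 := by
    have key := intervalIntegral_congr_Ioo (g1 := f) (g2 := fun _ => (0:ℝ)) htB.le (by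
      intro w hw
      exact hf_zero_gt w hw.1)
    simpa using key
  rw [hzero, add_zero]
  rw [← intervalIntegral.integral_add_adjacent_intervals (a := 0) (b := R) (c := B)
    hfInt.intervalIntegrable hfInt.intervalIntegrable,
    ← intervalIntegral.integral_add_adjacent_intervals (a := 0) (b := H) (c := R)
    hfInt.intervalIntegrable hfInt.intervalIntegrable]
  have eD4 : ∫ w in R..B, f w = ∫ w in R..B,
      (2 * w / R ^ 2 - 6 * w * (w ^ 2 - R ^ 2) / (R ^ 2 * H ^ 2)
        + 4 * w * (w ^ 2 - R ^ 2) ^ ((3 : ℝ) / 2) / (R ^ 2 * H ^ 3)) :=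
    intervalIntegral_congr_Ioo hRB (by
      intro w hw
      rw [hf w, if_neg (by rintro ⟨-, hc⟩; linarith [hw.1, hHR]),
        if_neg (by rintro ⟨-, hc⟩; linarith [hw.1]),
        if_pos ⟨hw.1.le, hw.2.le⟩])
  rw [eD1, eB2, eC3, eD4, integral_f3 R H R B hR.ne' hH.ne']
  rw [show R ^ 2 - R ^ 2 = (0:ℝ) by ring,
    Real.zero_rpow (by norm_num : ((5:ℝ)/2) ≠ 0)]
  rw [show B ^ 2 - R ^ 2 = H ^ 2 by rw [hB2]; ring, sq_rpow_5_2 hH0]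
  rw [show B ^ 4 = (B ^ 2) ^ 2 by ring, hB2]
  field_simp
  ring

set_option maxHeartbeats 1000000 in
/-- Density of the 3D UAV-to-user distance `W = √(h² + Z²)` in the mobility
phase of the mixed mobility model: `h` with density `6x/H² − 6x²/H³` on
`[0, H]`, `Z` with density `2z/R²` on `[0, R]`, independent. -/
theorem mixed_mobility_mobile_distance_density
    {Ω : Type*} [MeasurableSpace Ω] (μ : Measure Ω) [IsProbabilityMeasure μ]
    (H R : ℝ) (hH : 0 < H) (hHR : H ≤ R)
    (h Z : Ω → ℝ) (hhm : Measurable h) (hZm : Measurable Z)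
    (hindep : IndepFun h Z μ)
    (hh : μ.map h = volume.withDensity (fun x => ENNReal.ofReal
        (if x ∈ Set.Icc (0 : ℝ) H then 6 * x / H ^ 2 - 6 * x ^ 2 / H ^ 3 else 0)))
    (hZ : μ.map Z = volume.withDensity (fun z => ENNReal.ofReal
        (if z ∈ Set.Icc (0 : ℝ) R then 2 * z / R ^ 2 else 0)))
    (f : ℝ → ℝ)
    (hf : ∀ w, f w =
      if 0 ≤ w ∧ w < H then 6 * w ^ 3 / (R ^ 2 * H ^ 2) - 4 * w ^ 4 / (R ^ 2 * H ^ 3)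
      else if H ≤ w ∧ w < R then 2 * w / R ^ 2
      else if R ≤ w ∧ w ≤ Real.sqrt (R ^ 2 + H ^ 2) then
        2 * w / R ^ 2 - 6 * w * (w ^ 2 - R ^ 2) / (R ^ 2 * H ^ 2)
          + 4 * w * (w ^ 2 - R ^ 2) ^ ((3 : ℝ) / 2) / (R ^ 2 * H ^ 3)
      else 0) :
    μ.map (fun ω => Real.sqrt ((h ω) ^ 2 + (Z ω) ^ 2))
      = volume.withDensity (fun w => ENNReal.ofReal (f w)) := by
  have hR : 0 < R := lt_of_lt_of_le hH hHR
  have hH0 : (0:ℝ) ≤ H := hH.le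
  have hB2 : (Real.sqrt (R ^ 2 + H ^ 2)) ^ 2 = R ^ 2 + H ^ 2 := Real.sq_sqrt (by positivity)
  set B := Real.sqrt (R ^ 2 + H ^ 2) with hBdef
  have hB0 : (0:ℝ) ≤ B := Real.sqrt_nonneg _
  have hRB : R ≤ B := by nlinarith [hB2, hB0, hR, hH, sq_nonneg (B - R)]
  have hHB : H ≤ B := by nlinarith [hB2, hB0, hR, hH, sq_nonneg (B - H)]
  have hh' : μ.map h = volume.withDensity (fun x => ENNReal.ofReal (pden H x)) := hh
  have hZ' : μ.map Z = volume.withDensity (fun z => ENNReal.ofReal (qden R z)) := hZ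
  have hf_nonneg : ∀ w, 0 ≤ f w := by
    intro w
    rw [hf w]
    split_ifs with h1 h2 h3
    · have hw0 := h1.1
      have hwH := h1.2
      have key : 6 * w ^ 3 / (R ^ 2 * H ^ 2) - 4 * w ^ 4 / (R ^ 2 * H ^ 3)
          = 2 * w ^ 3 * (3 * H - 2 * w) / (R ^ 2 * H ^ 3) := by
        field_simp
        ring
      rw [key]
      apply div_nonneg _ (by positivity)
      exact mul_nonneg (by positivity) (by linarith)
    · exact div_nonneg (by linarith [h2.1]) (by positivity)
    · obtain ⟨hwR, hwB⟩ := h3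
      have hw0 : 0 ≤ w := le_trans hR.le hwR
      have hwR2 : R ^ 2 ≤ w ^ 2 := by nlinarith
      set u := Real.sqrt (w ^ 2 - R ^ 2) with hudef
      have hu0 : 0 ≤ u := Real.sqrt_nonneg _
      have hu2 : u ^ 2 = w ^ 2 - R ^ 2 := Real.sq_sqrt (by linarith)
      have hwB2 : w ^ 2 ≤ B ^ 2 := by nlinarith
      have huH : u ≤ H := by
        nlinarith [hu2, hB2, hwB2, hu0, hH0, sq_nonneg (u - H), sq_nonneg (u + H)]
      have h32 : (w ^ 2 - R ^ 2) ^ ((3:ℝ)/2) = u ^ 3 := by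
        rw [← hu2]
        exact sq_rpow_3_2 hu0
      rw [h32]
      have key : 2 * w / R ^ 2 - 6 * w * (w ^ 2 - R ^ 2) / (R ^ 2 * H ^ 2)
          + 4 * w * u ^ 3 / (R ^ 2 * H ^ 3)
          = 2 * w * (H ^ 3 - 3 * u ^ 2 * H + 2 * u ^ 3) / (R ^ 2 * H ^ 3) := by
        rw [← hu2]
        field_simp
        ring
      rw [key]
      apply div_nonneg _ (by positivity)
      apply mul_nonneg (by linarith)
      nlinarith [mul_nonneg (sq_nonneg (H - u)) (show (0:ℝ) ≤ H + 2 * u by linarith)]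
    · exact le_refl 0
  have hf_zero_nonpos : ∀ w : ℝ, w ≤ 0 → f w = 0 := by
    intro w hw
    rw [hf w]
    split_ifs with h1 h2 h3
    · have hw0 : w = 0 := le_antisymm hw h1.1
      rw [hw0]
      norm_num
    · exact absurd h2.1 (not_le.2 (by linarith))
    · exact absurd h3.1 (not_le.2 (by linarith))
    · rfl
  have hf_zero_gt : ∀ w : ℝ, B < w → f w = 0 := by
    intro w hw
    rw [hf w]
    split_ifs with h1 h2 h3
    · exact absurd h1.2 (not_lt.2 (by linarith))
    · exact absurd h2.2 (not_lt.2 (by linarith))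
    · exact absurd h3.2 (not_le.2 hw)
    · rfl
  have hfInt : Integrable f volume := by
    have hind : f = (Icc (0 : ℝ) B).indicator f := by
      funext w
      rw [Set.indicator_apply]
      split_ifs with hw
      · rfl
      · rw [Set.mem_Icc] at hw
        push_neg at hw
        rcases lt_or_ge w 0 with hcase | hcase
        · exact hf_zero_nonpos w hcase.le
        · exact hf_zero_gt w (hw hcase)
    rw [hind]
    apply (integrable_indicator_iff measurableSet_Icc).2
    have hi1 : IntegrableOn f (Ico 0 H) volume := by
      apply (((by fun_prop : Continuous fun w : ℝ =>
          6 * w ^ 3 / (R ^ 2 * H ^ 2) - 4 * w ^ 4 / (R ^ 2 * H ^ 3)).integrableOn_Icc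
          (a := 0) (b := H)).mono_set Ico_subset_Icc_self).congr_fun ?_ measurableSet_Ico
      intro w hw
      rw [hf w, if_pos ⟨hw.1, hw.2⟩]
    have hi2 : IntegrableOn f (Ico H R) volume := by
      apply (((by fun_prop : Continuous fun w : ℝ =>
          2 * w / R ^ 2).integrableOn_Icc (a := H) (b := R)).mono_set
          Ico_subset_Icc_self).congr_fun ?_ measurableSet_Ico
      intro w hw
      rw [hf w, if_neg (by rintro ⟨-, hc⟩; linarith [hw.1]), if_pos ⟨hw.1, hw.2⟩]
    have hi3 : IntegrableOn f (Icc R B) volume := by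
      apply ((continuous_f3 R H).integrableOn_Icc (a := R) (b := B)).congr_fun ?_
        measurableSet_Icc
      intro w hw
      rw [hf w, if_neg (by rintro ⟨-, hc⟩; linarith [hw.1, hHR]),
        if_neg (by rintro ⟨-, hc⟩; linarith [hw.1]), if_pos ⟨hw.1, hw.2⟩]
    have hsub : Icc (0:ℝ) B ⊆ (Ico 0 H ∪ Ico H R) ∪ Icc R B := by
      intro w hw
      rcases lt_or_ge w H with hc1 | hc1
      · exact Or.inl (Or.inl ⟨hw.1, hc1⟩)
      · rcases lt_or_ge w R with hc2 | hc2
        · exact Or.inl (Or.inr ⟨hc1, hc2⟩)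
        · exact Or.inr ⟨hc2, hw.2⟩
    exact ((hi1.union hi2).union hi3).mono_set hsub
  have hWm : Measurable fun pt : ℝ × ℝ => Real.sqrt (pt.1 ^ 2 + pt.2 ^ 2) :=
    (Real.continuous_sqrt.comp ((continuous_fst.pow 2).add (continuous_snd.pow 2))).measurable
  have hpairm : Measurable fun ω => (h ω, Z ω) := hhm.prodMk hZm
  have hmapW : μ.map (fun ω => Real.sqrt ((h ω) ^ 2 + (Z ω) ^ 2))
      = ((volume.withDensity fun x => ENNReal.ofReal (pden H x)).prod
          (volume.withDensity fun z => ENNReal.ofReal (qden R z))).map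
          (fun pt : ℝ × ℝ => Real.sqrt (pt.1 ^ 2 + pt.2 ^ 2)) := by
    rw [← hh', ← hZ',
      ← (indepFun_iff_map_prod_eq_prod_map_map hhm.aemeasurable hZm.aemeasurable).1 hindep,
      Measure.map_map hWm hpairm]
    rfl
  haveI : IsProbabilityMeasure (μ.map (fun ω => Real.sqrt ((h ω) ^ 2 + (Z ω) ^ 2))) :=
    Measure.isProbabilityMeasure_map (hWm.comp hpairm).aemeasurable
  refine Measure.ext_of_Iic _ _ fun t => ?_
  rw [hmapW, Measure.map_apply hWm measurableSet_Iic, withDensity_apply _ measurableSet_Iic]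
  rcases lt_or_ge t 0 with ht | ht
  · have hpre : (fun pt : ℝ × ℝ => Real.sqrt (pt.1 ^ 2 + pt.2 ^ 2)) ⁻¹' Iic t = ∅ := by
      ext pt
      simp only [Set.mem_preimage, Set.mem_Iic, Set.mem_empty_iff_false, iff_false, not_le]
      exact lt_of_lt_of_le ht (Real.sqrt_nonneg _)
    rw [hpre, measure_empty]
    have hzero : ∀ w ∈ Iic t, ENNReal.ofReal (f w) = (fun _ : ℝ => (0:ENNReal)) w := by
      intro w hw
      rw [hf_zero_nonpos w (le_trans hw ht.le)]
      simp
    rw [setLIntegral_congr_fun measurableSet_Iic hzero, lintegral_zero]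
  · have hSm : MeasurableSet ((fun pt : ℝ × ℝ => Real.sqrt (pt.1 ^ 2 + pt.2 ^ 2)) ⁻¹' Iic t) :=
      hWm measurableSet_Iic
    rw [Measure.prod_apply hSm]
    have hpm : Measurable fun x => ENNReal.ofReal (pden H x) :=
      (Measurable.ite measurableSet_Icc (by fun_prop) measurable_const).ennreal_ofReal
    rw [lintegral_withDensity_eq_lintegral_mul _ hpm (measurable_measure_prodMk_left hSm)]
    have hp_nonneg : ∀ x, 0 ≤ pden H x := by
      intro x
      simp only [pden, Set.mem_Icc]
      split_ifs with hx
      · have key : 6 * x / H ^ 2 - 6 * x ^ 2 / H ^ 3 = 6 * x * (H - x) / H ^ 3 := by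
          field_simp
        rw [key]
        exact div_nonneg (mul_nonneg (by linarith [hx.1]) (by linarith [hx.2])) (by positivity)
      · exact le_refl 0
    have hpoint : ∀ x : ℝ, ((fun x => ENNReal.ofReal (pden H x)) *
        fun x => (volume.withDensity fun z => ENNReal.ofReal (qden R z))
          (Prod.mk x ⁻¹' ((fun pt : ℝ × ℝ => Real.sqrt (pt.1 ^ 2 + pt.2 ^ 2)) ⁻¹' Iic t))) x
        = ENNReal.ofReal (pden H x * Gfun t R x) := by
      intro x
      have hsec : (Prod.mk x ⁻¹' ((fun pt : ℝ × ℝ => Real.sqrt (pt.1 ^ 2 + pt.2 ^ 2)) ⁻¹' Iic t))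
          = {z : ℝ | Real.sqrt (x ^ 2 + z ^ 2) ≤ t} := rfl
      simp only [Pi.mul_apply]
      rw [hsec, section_measure R t hR ht x, ← ENNReal.ofReal_mul (hp_nonneg x)]
    rw [lintegral_congr hpoint]
    have hpGind : (fun x => pden H x * Gfun t R x)
        = (Icc (0 : ℝ) H).indicator
          (fun x => (6 * x / H ^ 2 - 6 * x ^ 2 / H ^ 3) * Gfun t R x) := by
      funext x
      rw [Set.indicator_apply]
      simp only [pden]
      split_ifs with hx
      · rfl
      · rw [zero_mul]
    have hPGInt : Integrable (fun x => pden H x * Gfun t R x) volume := by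
      rw [hpGind]
      exact (integrable_indicator_iff measurableSet_Icc).2
        (((by fun_prop : Continuous fun x : ℝ => 6 * x / H ^ 2 - 6 * x ^ 2 / H ^ 3).mul
          (Gfun_cont t R)).integrableOn_Icc)
    rw [← ofReal_integral_eq_lintegral_ofReal hPGInt
      (ae_of_all _ fun x => mul_nonneg (hp_nonneg x) (Gfun_nonneg t R x))]
    rw [← ofReal_integral_eq_lintegral_ofReal hfInt.restrict (ae_of_all _ hf_nonneg)]
    congr 1
    have hPGc : Continuous fun x : ℝ => (6 * x / H ^ 2 - 6 * x ^ 2 / H ^ 3) * Gfun t R x :=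
      (by fun_prop : Continuous fun x : ℝ => 6 * x / H ^ 2 - 6 * x ^ 2 / H ^ 3).mul
        (Gfun_cont t R)
    have hL1 : ∫ x, pden H x * Gfun t R x
        = ∫ x in (0:ℝ)..H, (6 * x / H ^ 2 - 6 * x ^ 2 / H ^ 3) * Gfun t R x := by
      rw [hpGind, integral_indicator measurableSet_Icc, integral_Icc_eq_integral_Ioc,
        ← intervalIntegral.integral_of_le hH0]
    have hRHS1 : ∫ w in Iic t, f w = ∫ w in (0:ℝ)..t, f w := by
      have h0 : ∫ w in Iic (0:ℝ), f w = 0 :=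
        setIntegral_eq_zero_of_forall_eq_zero fun w hw => hf_zero_nonpos w hw
      rw [← Set.Iic_union_Ioc_eq_Iic ht,
        setIntegral_union (Set.Iic_disjoint_Ioc le_rfl) measurableSet_Ioc
          hfInt.integrableOn hfInt.integrableOn,
        h0, zero_add, ← intervalIntegral.integral_of_le ht]
    rw [hL1, hRHS1]
    have eB2 := eval_poly_integral (g := f) 0 0 0 (3 / (2 * (R ^ 2 * H ^ 2)))
        (-(4 / (5 * (R ^ 2 * H ^ 3)))) hH0 (by
      intro w hw
      rw [hf w, if_pos ⟨hw.1.le, hw.2⟩]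
      ring)
    have eC3 := eval_poly_integral (g := f) 0 (1 / R ^ 2) 0 0 0 hHR (by
      intro w hw
      rw [hf w, if_neg (by rintro ⟨-, hc⟩; linarith [hw.1]), if_pos ⟨hw.1.le, hw.2⟩]
      ring)
    rcases lt_or_ge t H with htH | htH
    · exact case_A H R t hH hHR hR hH0 ht htH f hf hPGc
    · rcases lt_or_ge t R with htR | htR
      · exact case_B H R t hH hHR hR hH0 ht htH htR f hf hfInt hPGc eB2
      · rcases le_or_gt t B with htB | htB
        · exact case_C H R t B hH hHR hR hH0 hB2 hB0 hRB hHB hBdef ht htH htR htB f hf hfInt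
            hPGc eB2 eC3
        · exact case_D H R t B hH hHR hR hH0 hB2 hB0 hRB hHB ht htB f hf hf_zero_gt hfInt
            eB2 eC3
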